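/- arXiv:2504.13780 — 4 statements merged into one kernel-verified Lean document; each statement's English description precedes it below -/
import Mathlib

section
/- At the Stackelberg equilibrium (p*, q*) with φ > α(C_s + C_m), the supplier's utility equals (φ - α(C_s + C_m))²/(8α) and the manufacturer's utility equals (φ - α(C_s + C_m))²/(16α); in particular U_S* = 2·U_M*. -/
/-- At the Stackelberg equilibrium (p*, q*) with φ > α(C_s + C_m),
U_S* = (φ - α(C_s + C_m))²/(8α), U_M* = (φ - α(C_s + C_m))²/(16α), and U_S* = 2·U_M*. -/
theorem stackelberg_equilibrium_utilities
    (α Cs Cm φ : ℝ) (hα : 0 < α) (hα1 : α ≤ 1)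
    (hCs : 0 ≤ Cs) (hCm : 0 ≤ Cm) (hφ : α * (Cs + Cm) < φ)
    (qstar pstar : ℝ)
    (hq : qstar = (φ + α * (Cs - Cm)) / (2 * α))
    (hp : pstar = (φ + α * (qstar + Cm)) / (2 * α)) :
    max (φ - α * pstar) 0 * (qstar - Cs) = (φ - α * (Cs + Cm)) ^ 2 / (8 * α) ∧
    max (φ - α * pstar) 0 * (pstar - qstar - Cm) = (φ - α * (Cs + Cm)) ^ 2 / (16 * α) ∧
    max (φ - α * pstar) 0 * (qstar - Cs) =
      2 * (max (φ - α * pstar) 0 * (pstar - qstar - Cm)) := by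
  have hα' : α ≠ 0 := ne_of_gt hα
  have hpe : φ - α * pstar = (φ - α * (Cs + Cm)) / 4 := by
    subst hq hp; field_simp; ring
  have hmax : max (φ - α * pstar) 0 = (φ - α * (Cs + Cm)) / 4 := by
    rw [hpe, max_eq_left]; linarith
  rw [hmax]
  subst hq hp
  refine ⟨?_, ?_, ?_⟩ <;> field_simp <;> ring
end

section
/- There exists π̄ > 0 such that for all π > π̄ and every greedy misreporting policy r ≠ r^id (i.e., r_{ij} = 0 for i < j, r not the identity), the manufacturer's limit utility Ũ_M(r, π) = Σ_{i≥j} σ_i r_{ij}(max(h_{ij} - πf(r),0))² is strictly less than Ũ_M(r^id, π) = Σ_i σ_i h_{ii}². -/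
private lemma filter_le_sum' {n : ℕ} (i : Fin (n+1)) (g : Fin (n+1) → ℝ) :
    ∑ j ∈ Finset.univ.filter (· ≤ i), g j = g i + ∑ j ∈ Finset.univ.filter (· < i), g j := by
  have : Finset.univ.filter (· ≤ i) = insert i (Finset.univ.filter (· < i)) := by
    ext j
    simp only [Finset.mem_filter, Finset.mem_insert, Finset.mem_univ, true_and]
    constructor
    · intro hj
      rcases lt_or_eq_of_le hj with h' | h'
      · exact Or.inr h'
      · exact Or.inl h'
    · rintro (rfl | h')
      · exact le_refl _
      · exact le_of_lt h'
  rw [this, Finset.sum_insert (by simp)]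

private lemma sq_max_le' {x y m M : ℝ} (hm : 0 < m) (hmx : m ≤ x) (hmM : m ≤ M)
    (hy0 : 0 ≤ y) (hyM : y ≤ M) :
    max (x - y) 0 ^ 2 ≤ x ^ 2 - m ^ 2 / M * y := by
  have hM : 0 < M := lt_of_lt_of_le hm hmM
  have hkey : m ^ 2 / M * y ≤ m * y := by
    rw [div_mul_eq_mul_div, div_le_iff₀ hM]
    nlinarith [mul_nonneg (mul_nonneg hm.le hy0) (sub_nonneg.mpr hmM)]
  rcases le_total y x with hxy | hxy
  · rw [max_eq_left (by linarith)]
    nlinarith [mul_le_mul_of_nonneg_left hmx hy0, mul_nonneg hy0 (sub_nonneg.mpr hxy)]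
  · rw [max_eq_right (by linarith)]
    have h2 : m ^ 2 / M * y ≤ m ^ 2 := by
      rw [div_mul_eq_mul_div, div_le_iff₀ hM]
      nlinarith
    nlinarith

set_option maxHeartbeats 1000000 in
/-- Theorem 1: There exists π̄ > 0 such that for all π > π̄ and every
greedy misreporting policy r ≠ r^id, the manufacturer's limit utility is strictly less
than the truthful utility Σ_i σ_i h_{ii}². -/
theorem exists_truth_revealing_penalty
    (L : ℕ) (φ σ : Fin (L + 1) → ℝ) (α Cm Cs : ℝ)
    (hα : 0 < α) (hα1 : α ≤ 1) (hmono : StrictMono φ)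
    (hσ : ∀ i, 0 < σ i) (hσ1 : ∑ i, σ i = 1)
    (hφ1 : α * (Cs + Cm) < φ 0)
    (h : Fin (L + 1) → Fin (L + 1) → ℝ)
    (hh : ∀ i j, h i j = (2 * φ i - φ j - α * (Cm + Cs)) / (4 * Real.sqrt α)) :
    ∃ πbar > (0 : ℝ), ∀ π > πbar, ∀ r : Fin (L + 1) → Fin (L + 1) → ℝ,
      (∀ i j, 0 ≤ r i j) → (∀ i j, i < j → r i j = 0) →
      (∀ i, ∑ j, r i j = 1) →
      (r ≠ fun i j => if i = j then 1 else 0) →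
      ∑ i, ∑ j ∈ Finset.univ.filter (· ≤ i), σ i * r i j *
          (max (h i j - π * (∑ i', ∑ j' ∈ Finset.univ.filter (· < i'),
            σ i' * (φ i' - φ j') * r i' j')) 0) ^ 2
        < ∑ i, σ i * (h i i) ^ 2 := by
  have hsq : 0 < Real.sqrt α := Real.sqrt_pos.mpr hα
  have hd : (0:ℝ) < 4 * Real.sqrt α := by positivity
  have hφ1' : α * (Cm + Cs) < φ 0 := by rw [add_comm Cm Cs]; exact hφ1
  have hφ0 : ∀ i : Fin (L+1), φ 0 ≤ φ i := fun i => hmono.monotone (Fin.zero_le i)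
  have hφlast : ∀ i : Fin (L+1), φ i ≤ φ (Fin.last L) := fun i => hmono.monotone (Fin.le_last i)
  have hdle : ∀ x z : ℝ, x ≤ z → x / (4 * Real.sqrt α) ≤ z / (4 * Real.sqrt α) :=
    fun x z hxz => (div_le_div_iff_of_pos_right hd).mpr hxz
  have hm : 0 < h 0 0 := by
    rw [hh]
    apply div_pos _ hd
    linarith
  have hmle : ∀ i, h 0 0 ≤ h i i := by
    intro i
    rw [hh, hh]
    apply hdle
    have := hφ0 i
    linarith
  have hMub : ∀ i j, h i j ≤ h (Fin.last L) 0 := by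
    intro i j
    rw [hh, hh]
    apply hdle
    have h1 := hφlast i
    have h2 := hφ0 j
    linarith
  set m : ℝ := h 0 0 with hm_def
  set M : ℝ := h (Fin.last L) 0 with hM_def
  have hmM : m ≤ M := hMub 0 0
  have hM : 0 < M := lt_of_lt_of_le hm hmM
  -- a uniform positive lower bound for the potential gaps
  obtain ⟨δ, hδpos, hδle⟩ : ∃ δ : ℝ, 0 < δ ∧ ∀ i j : Fin (L+1), j < i → δ ≤ φ i - φ j := by
    refine ⟨Finset.univ.inf' Finset.univ_nonempty
      (fun p : Fin (L+1) × Fin (L+1) => if p.2 < p.1 then φ p.1 - φ p.2 else 1), ?_, ?_⟩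
    · rw [Finset.lt_inf'_iff]
      intro p _
      split_ifs with hp
      · exact sub_pos.mpr (hmono hp)
      · exact one_pos
    · intro i j hij
      have h1 := Finset.inf'_le
        (fun p : Fin (L+1) × Fin (L+1) => if p.2 < p.1 then φ p.1 - φ p.2 else 1)
        (Finset.mem_univ (i, j))
      simpa only [hij, ↓reduceIte] using h1
  have hπbarpos : (0:ℝ) < 2 * M / δ + 2 * M ^ 3 / (m ^ 2 * δ) := by positivity
  refine ⟨2 * M / δ + 2 * M ^ 3 / (m ^ 2 * δ), hπbarpos, ?_⟩
  intro π hπ r hr0 hrup hrsum hrne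
  have hπpos : 0 < π := lt_trans hπbarpos hπ
  have hπ1 : 2 * M < π * δ := by
    have h1 : 2 * M / δ < π := by
      have : (0:ℝ) ≤ 2 * M ^ 3 / (m ^ 2 * δ) := by positivity
      linarith
    exact (div_lt_iff₀ hδpos).mp h1
  have hπ2 : 2 * M ^ 3 < π * (m ^ 2 * δ) := by
    have h1 : 2 * M ^ 3 / (m ^ 2 * δ) < π := by
      have : (0:ℝ) ≤ 2 * M / δ := by positivity
      linarith
    exact (div_lt_iff₀ (by positivity)).mp h1
  set F : ℝ := ∑ i', ∑ j' ∈ Finset.univ.filter (· < i'), σ i' * (φ i' - φ j') * r i' j'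
    with hF_def
  have hF0 : 0 ≤ F := by
    rw [hF_def]
    apply Finset.sum_nonneg
    intro i _
    apply Finset.sum_nonneg
    intro j hj
    have hjlt : j < i := (Finset.mem_filter.mp hj).2
    have h1 := hδle i j hjlt
    exact mul_nonneg (mul_nonneg (hσ i).le (by linarith)) (hr0 i j)
  set y : ℝ := π * F with hy_def
  have hy0 : 0 ≤ y := mul_nonneg hπpos.le hF0
  set ε : Fin (L+1) → ℝ := fun i => ∑ j ∈ Finset.univ.filter (· < i), r i j with hε_def
  have hεnn : ∀ i, 0 ≤ ε i := by
    intro i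
    simp only [hε_def]
    exact Finset.sum_nonneg fun j _ => hr0 i j
  have hrii : ∀ i, r i i = 1 - ε i := by
    intro i
    have h1 : ∑ j ∈ Finset.univ.filter (· ≤ i), r i j = ∑ j, r i j :=
      Finset.sum_subset (Finset.filter_subset _ _)
        (fun j _ hj => hrup i j (not_le.mp (by simpa using hj)))
    rw [filter_le_sum' i (r i), hrsum i] at h1
    simp only [hε_def]
    linarith [h1]
  set s : ℝ := ∑ i, σ i * ε i with hs_def
  have hs0 : 0 ≤ s := by
    rw [hs_def]
    exact Finset.sum_nonneg fun i _ => mul_nonneg (hσ i).le (hεnn i)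
  have hspos : 0 < s := by
    rcases hs0.lt_or_eq with h' | h'
    · exact h'
    · exfalso
      apply hrne
      have hε0 : ∀ i, ε i = 0 := by
        intro i
        have h2 := (Finset.sum_eq_zero_iff_of_nonneg
          (fun i _ => mul_nonneg (hσ i).le (hεnn i))).mp h'.symm i (Finset.mem_univ i)
        exact (mul_eq_zero.mp h2).resolve_left (hσ i).ne'
      have hrlt : ∀ i j, j < i → r i j = 0 := by
        intro i j hij
        have h3 := hε0 i
        simp only [hε_def] at h3
        exact (Finset.sum_eq_zero_iff_of_nonneg (fun j _ => hr0 i j)).mp h3 j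
          (by simp [hij])
      funext i j
      show r i j = if i = j then 1 else 0
      rcases lt_trichotomy i j with hij | hij | hij
      · rw [if_neg (ne_of_lt hij), hrup i j hij]
      · subst hij
        rw [if_pos rfl, hrii i, hε0 i]
        norm_num
      · rw [if_neg (ne_of_gt hij), hrlt i j hij]
  have hsF : δ * s ≤ F := by
    rw [hs_def, hF_def, Finset.mul_sum]
    apply Finset.sum_le_sum
    intro i _
    simp only [hε_def]
    rw [Finset.mul_sum, Finset.mul_sum]
    apply Finset.sum_le_sum
    intro j hj
    have hjlt : j < i := (Finset.mem_filter.mp hj).2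
    have h1 := mul_le_mul_of_nonneg_right (hδle i j hjlt)
      (mul_nonneg (hσ i).le (hr0 i j))
    nlinarith [h1]
  have hyge : π * δ * s ≤ y := by
    rw [hy_def]
    calc π * δ * s = π * (δ * s) := by ring
      _ ≤ π * F := mul_le_mul_of_nonneg_left hsF hπpos.le
  have hTpos : 0 < ∑ i, σ i * (h i i) ^ 2 := by
    apply Finset.sum_pos _ Finset.univ_nonempty
    intro i _
    have hpos : 0 < h i i := lt_of_lt_of_le hm (hmle i)
    exact mul_pos (hσ i) (pow_pos hpos 2)
  by_cases hyM : M ≤ y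
  · -- penalty wipes out everything
    have hz : ∑ i, ∑ j ∈ Finset.univ.filter (· ≤ i), σ i * r i j * max (h i j - y) 0 ^ 2
        = 0 := by
      apply Finset.sum_eq_zero
      intro i _
      apply Finset.sum_eq_zero
      intro j _
      rw [max_eq_right (by linarith [hMub i j])]
      ring
    rw [hz]
    exact hTpos
  · push_neg at hyM
    set a : ℝ := m ^ 2 / M with ha_def
    have ha0 : 0 ≤ a := by positivity
    have haM : a * M = m ^ 2 := div_mul_cancel₀ _ hM.ne'
    have hshalf : s < 1 / 2 := by
      have h1 : 2 * M * s < π * δ * s := mul_lt_mul_of_pos_right hπ1 hspos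
      nlinarith [hyge, hyM, hM]
    have hrw : ∀ i : Fin (L+1),
        ∑ j ∈ Finset.univ.filter (· ≤ i), σ i * r i j * max (h i j - y) 0 ^ 2
        = σ i * r i i * max (h i i - y) 0 ^ 2
          + ∑ j ∈ Finset.univ.filter (· < i), σ i * r i j * max (h i j - y) 0 ^ 2 :=
      fun i => filter_le_sum' i _
    simp only [hrw]
    have step1 : ∀ i : Fin (L+1),
        σ i * r i i * max (h i i - y) 0 ^ 2
          + ∑ j ∈ Finset.univ.filter (· < i), σ i * r i j * max (h i j - y) 0 ^ 2
        ≤ σ i * r i i * (h i i ^ 2 - a * y) + σ i * ε i * M ^ 2 := by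
      intro i
      have t1 : σ i * r i i * max (h i i - y) 0 ^ 2
          ≤ σ i * r i i * (h i i ^ 2 - a * y) := by
        apply mul_le_mul_of_nonneg_left _ (mul_nonneg (hσ i).le (hr0 i i))
        rw [ha_def]
        exact sq_max_le' hm (hmle i) hmM hy0 hyM.le
      have t2 : ∑ j ∈ Finset.univ.filter (· < i), σ i * r i j * max (h i j - y) 0 ^ 2
          ≤ σ i * ε i * M ^ 2 := by
        have heq : σ i * ε i * M ^ 2
            = ∑ j ∈ Finset.univ.filter (· < i), σ i * r i j * M ^ 2 := by
          simp only [hε_def]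
          rw [Finset.mul_sum, Finset.sum_mul]
        rw [heq]
        apply Finset.sum_le_sum
        intro j hj
        apply mul_le_mul_of_nonneg_left _ (mul_nonneg (hσ i).le (hr0 i j))
        have h1 : max (h i j - y) 0 ≤ M := max_le (by linarith [hMub i j]) hM.le
        have h2 : (0:ℝ) ≤ max (h i j - y) 0 := le_max_right _ _
        exact pow_le_pow_left₀ h2 h1 2
      linarith [t1, t2]
    have step2 : ∀ i : Fin (L+1),
        σ i * r i i * (h i i ^ 2 - a * y) + σ i * ε i * M ^ 2
        ≤ σ i * (h i i ^ 2 - a * y + ε i * (a * y) + ε i * M ^ 2) := by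
      intro i
      rw [hrii i]
      nlinarith [mul_nonneg (mul_nonneg (hσ i).le (hεnn i)) (sq_nonneg (h i i))]
    have expand : ∑ i, σ i * (h i i ^ 2 - a * y + ε i * (a * y) + ε i * M ^ 2)
        = (∑ i, σ i * h i i ^ 2) - a * y * (∑ i, σ i)
          + (a * y + M ^ 2) * (∑ i, σ i * ε i) := by
      rw [Finset.mul_sum, Finset.mul_sum, ← Finset.sum_sub_distrib, ← Finset.sum_add_distrib]
      exact Finset.sum_congr rfl fun i _ => by ring
    have key2 : M ^ 3 * s < m ^ 2 * y * (1 - s) := by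
      have A : m ^ 2 * (π * δ * s) ≤ m ^ 2 * y :=
        mul_le_mul_of_nonneg_left hyge (sq_nonneg m)
      have B : m ^ 2 * (π * δ * s) * (1 - s) ≤ m ^ 2 * y * (1 - s) :=
        mul_le_mul_of_nonneg_right A (by linarith)
      have C : m ^ 2 * (π * δ * s) * (1 / 2) ≤ m ^ 2 * (π * δ * s) * (1 - s) :=
        mul_le_mul_of_nonneg_left (by linarith)
          (mul_nonneg (sq_nonneg m) (mul_nonneg (mul_nonneg hπpos.le hδpos.le) hs0))
      have D : M ^ 3 * s < m ^ 2 * (π * δ * s) * (1 / 2) := by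
        have D' := mul_lt_mul_of_pos_right hπ2 hspos
        nlinarith [D']
      linarith
    have key3 : M ^ 2 * s < a * y * (1 - s) := by
      rw [← mul_lt_mul_iff_left₀ hM]
      calc M ^ 2 * s * M = M ^ 3 * s := by ring
        _ < m ^ 2 * y * (1 - s) := key2
        _ = a * M * (y * (1 - s)) := by rw [haM]; ring
        _ = a * y * (1 - s) * M := by ring
    calc ∑ i, (σ i * r i i * max (h i i - y) 0 ^ 2
          + ∑ j ∈ Finset.univ.filter (· < i), σ i * r i j * max (h i j - y) 0 ^ 2)
        ≤ ∑ i, (σ i * r i i * (h i i ^ 2 - a * y) + σ i * ε i * M ^ 2) :=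
          Finset.sum_le_sum fun i _ => step1 i
      _ ≤ ∑ i, σ i * (h i i ^ 2 - a * y + ε i * (a * y) + ε i * M ^ 2) :=
          Finset.sum_le_sum fun i _ => step2 i
      _ = (∑ i, σ i * h i i ^ 2) - a * y * (∑ i, σ i)
            + (a * y + M ^ 2) * (∑ i, σ i * ε i) := expand
      _ = (∑ i, σ i * h i i ^ 2) - a * y + (a * y + M ^ 2) * s := by
          rw [hσ1, ← hs_def]; ring
      _ < ∑ i, σ i * h i i ^ 2 := by nlinarith [key3]
end

section
/- The function ḡ(d̄) = [Σ_{i=N_j(d̄)}^L σ_i r_{ij} (√α h_{ij} - πα(d̄ - √α h_{jj}))] / (Σ_{i=1}^L σ_i r_{ij}) - d̄, where N_j(d̄) = min{i : h_{ij} > √α π (d̄ - √α h_{jj})}, is strictly decreasing in d̄ on [0, φ_L]. -/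
/-- The ODE right-hand side ḡ is strictly decreasing on [0, φ_L]. -/
theorem gbar_strictAnti
    (L : ℕ) (φ σ : Fin (L + 1) → ℝ) (α Cm Cs π : ℝ)
    (hα : 0 < α) (hα1 : α ≤ 1) (hπ : 0 ≤ π) (hmono : StrictMono φ)
    (hσ : ∀ i, 0 < σ i)
    (j : Fin (L + 1))
    (r : Fin (L + 1) → Fin (L + 1) → ℝ) (hr0 : ∀ i, 0 ≤ r i j)
    (hrpos : 0 < ∑ i, σ i * r i j)
    (h : Fin (L + 1) → Fin (L + 1) → ℝ)
    (hh : ∀ i i', h i i' = (2 * φ i - φ i' - α * (Cm + Cs)) / (4 * Real.sqrt α))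
    (g : ℝ → ℝ)
    (hg : ∀ d, g d =
      (∑ i ∈ Finset.univ.filter
          (fun i => Real.sqrt α * π * (d - Real.sqrt α * h j j) < h i j),
        σ i * r i j * (Real.sqrt α * h i j - π * α * (d - Real.sqrt α * h j j)))
        / (∑ i, σ i * r i j) - d) :
    StrictAntiOn g (Set.Icc 0 (φ (Fin.last L))) := by
  intro d1 _ d2 _ hlt
  rw [hg d1, hg d2]
  have hsa : 0 < Real.sqrt α := Real.sqrt_pos.mpr hα
  set c := Real.sqrt α * h j j with hc
  have key : (∑ i ∈ Finset.univ.filter (fun i => Real.sqrt α * π * (d2 - c) < h i j),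
        σ i * r i j * (Real.sqrt α * h i j - π * α * (d2 - c)))
      ≤ ∑ i ∈ Finset.univ.filter (fun i => Real.sqrt α * π * (d1 - c) < h i j),
        σ i * r i j * (Real.sqrt α * h i j - π * α * (d1 - c)) := by
    have hsub : Finset.univ.filter (fun i => Real.sqrt α * π * (d2 - c) < h i j) ⊆
        Finset.univ.filter (fun i => Real.sqrt α * π * (d1 - c) < h i j) := by
      intro i hi
      simp only [Finset.mem_filter, Finset.mem_univ, true_and] at hi ⊢
      have hx : Real.sqrt α * π * (d1 - c) ≤ Real.sqrt α * π * (d2 - c) :=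
        mul_le_mul_of_nonneg_left (by linarith) (by positivity)
      linarith
    calc (∑ i ∈ Finset.univ.filter (fun i => Real.sqrt α * π * (d2 - c) < h i j),
          σ i * r i j * (Real.sqrt α * h i j - π * α * (d2 - c)))
        ≤ ∑ i ∈ Finset.univ.filter (fun i => Real.sqrt α * π * (d2 - c) < h i j),
          σ i * r i j * (Real.sqrt α * h i j - π * α * (d1 - c)) := by
          apply Finset.sum_le_sum
          intro i _
          apply mul_le_mul_of_nonneg_left _ (mul_nonneg (hσ i).le (hr0 i))
          have hx : π * α * (d1 - c) ≤ π * α * (d2 - c) :=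
            mul_le_mul_of_nonneg_left (by linarith) (by positivity)
          linarith
      _ ≤ _ := by
          apply Finset.sum_le_sum_of_subset_of_nonneg hsub
          intro i hi _
          simp only [Finset.mem_filter, Finset.mem_univ, true_and] at hi
          apply mul_nonneg (mul_nonneg (hσ i).le (hr0 i))
          have hx : α * π * (d1 - c) < Real.sqrt α * h i j := by
            have hm := mul_lt_mul_of_pos_left hi hsa
            have hs : Real.sqrt α * Real.sqrt α = α := Real.mul_self_sqrt hα.le
            have he : Real.sqrt α * (Real.sqrt α * π * (d1 - c)) = α * π * (d1 - c) := by
              linear_combination (π * (d1 - c)) * hs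
            linarith [hm, he.symm.le]
          linarith [hx]
  have hdiv : (∑ i ∈ Finset.univ.filter (fun i => Real.sqrt α * π * (d2 - c) < h i j),
        σ i * r i j * (Real.sqrt α * h i j - π * α * (d2 - c))) / (∑ i, σ i * r i j)
      ≤ (∑ i ∈ Finset.univ.filter (fun i => Real.sqrt α * π * (d1 - c) < h i j),
        σ i * r i j * (Real.sqrt α * h i j - π * α * (d1 - c))) / (∑ i, σ i * r i j) := by
    gcongr
  linarith
end

section
/- For any misreporting policy r with Σ_j r_{ij} = 1, the difference α Σ_{i,j} σ_i r_{ij} h_{jj} h_{ij} - α Σ_i σ_i h_{ii}² equals -(1/16) Σ_i σ_i Σ_j r_{ij} (φ_j - φ_i)², which is strictly negative whenever r_{ij} > 0 for some i ≠ j. -/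
/-- For any misreporting policy r with row sums 1,
α Σ_{i,j} σ_i r_{ij} h_{jj} h_{ij} - α Σ_i σ_i h_{ii}²
 = -(1/16) Σ_i σ_i Σ_j r_{ij}(φ_j - φ_i)², strictly negative if r_{ij} > 0 for some i ≠ j. -/
theorem weighted_h_difference
    (L : ℕ) (φ σ : Fin L → ℝ) (α Cm Cs : ℝ)
    (hα : 0 < α) (hα1 : α ≤ 1) (hinj : Function.Injective φ) (hσ : ∀ i, 0 < σ i)
    (h : Fin L → Fin L → ℝ)
    (hh : ∀ i j, h i j = (2 * φ i - φ j - α * (Cm + Cs)) / (4 * Real.sqrt α))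
    (r : Fin L → Fin L → ℝ) (hr0 : ∀ i j, 0 ≤ r i j)
    (hsum : ∀ i, ∑ j, r i j = 1) :
    (α * ∑ i, ∑ j, σ i * r i j * h j j * h i j) - α * ∑ i, σ i * (h i i) ^ 2
      = -(1 / 16) * ∑ i, σ i * ∑ j, r i j * (φ j - φ i) ^ 2 ∧
    ((∃ i j, i ≠ j ∧ 0 < r i j) →
      (α * ∑ i, ∑ j, σ i * r i j * h j j * h i j) - α * ∑ i, σ i * (h i i) ^ 2 < 0) := by
  have hs : 0 < Real.sqrt α := Real.sqrt_pos.mpr hα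
  have hsq : Real.sqrt α ^ 2 = α := Real.sq_sqrt hα.le
  have key : ∀ i j, α * (h j j * h i j) - α * h i i ^ 2
      = -(1/16) * (φ j - φ i) ^ 2 := by
    intro i j
    rw [hh, hh, hh]
    set s := Real.sqrt α with hsd
    rw [← hsq]
    field_simp
    ring
  have e2 : ∀ i, α * (σ i * h i i ^ 2) = ∑ j, σ i * r i j * (α * h i i ^ 2) := by
    intro i
    have : ∑ j, σ i * r i j * (α * h i i ^ 2)
        = (∑ j, r i j) * (σ i * (α * h i i ^ 2)) := by
      rw [Finset.sum_mul]
      exact Finset.sum_congr rfl fun j _ => by ring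
    rw [this, hsum]; ring
  have main : (α * ∑ i, ∑ j, σ i * r i j * h j j * h i j) - α * ∑ i, σ i * (h i i) ^ 2
      = -(1 / 16) * ∑ i, σ i * ∑ j, r i j * (φ j - φ i) ^ 2 := by
    calc (α * ∑ i, ∑ j, σ i * r i j * h j j * h i j) - α * ∑ i, σ i * (h i i) ^ 2
        = ∑ i, ∑ j, σ i * r i j * (α * (h j j * h i j) - α * h i i ^ 2) := by
          rw [Finset.mul_sum, Finset.mul_sum, ← Finset.sum_sub_distrib]
          refine Finset.sum_congr rfl fun i _ => ?_
          rw [Finset.mul_sum, e2 i, ← Finset.sum_sub_distrib]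
          exact Finset.sum_congr rfl fun j _ => by ring
      _ = ∑ i, ∑ j, σ i * r i j * (-(1/16) * (φ j - φ i) ^ 2) := by
          refine Finset.sum_congr rfl fun i _ => Finset.sum_congr rfl fun j _ => ?_
          rw [key]
      _ = -(1 / 16) * ∑ i, σ i * ∑ j, r i j * (φ j - φ i) ^ 2 := by
          rw [Finset.mul_sum]
          refine Finset.sum_congr rfl fun i _ => ?_
          rw [Finset.mul_sum, Finset.mul_sum]
          exact Finset.sum_congr rfl fun j _ => by ring
  refine ⟨main, fun ⟨i, j, hij, hrij⟩ => ?_⟩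
  rw [main]
  have hpos : 0 < ∑ i, σ i * ∑ j, r i j * (φ j - φ i) ^ 2 := by
    have hnn : ∀ k, 0 ≤ σ k * ∑ j, r k j * (φ j - φ k) ^ 2 := fun k =>
      mul_nonneg (hσ k).le (Finset.sum_nonneg fun j _ =>
        mul_nonneg (hr0 k j) (sq_nonneg _))
    refine Finset.sum_pos' (fun k _ => hnn k) ⟨i, Finset.mem_univ i, ?_⟩
    refine mul_pos (hσ i) ?_
    have hterm : 0 < r i j * (φ j - φ i) ^ 2 := by
      have : φ j ≠ φ i := fun hc => hij (hinj hc).symm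
      exact mul_pos hrij (sq_pos_of_ne_zero (sub_ne_zero.mpr this))
    refine Finset.sum_pos' (fun k _ => mul_nonneg (hr0 i k) (sq_nonneg _))
      ⟨j, Finset.mem_univ j, hterm⟩
  linarith
end
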